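/- Let G be a finite group, m(G) the maximum order of an abelian subgroup of G, and N_max(G) the number of abelian subgroups of order m(G). If G is non-abelian, let b(G) < m(G) be the second-largest order of an abelian subgroup. Then there exists a constant C such that for all r ≥ 1, | |Comm_r(G)| − N_max(G)·m(G)^r | ≤ C·b(G)^r. -/

import Mathlib

/-- The set of `r`-tuples of pairwise commuting elements of `G`. -/
def CommTuple (r : ℕ) (G : Type*) [Group G] : Type _ :=
  {x : Fin r → G // ∀ i j, Commute (x i) (x j)}

/-- `P r G = |Comm_r(G)| / |G|^r`. -/
noncomputable def P (r : ℕ) (G : Type*) [Group G] : ℝ :=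
  (Nat.card (CommTuple r G) : ℝ) / (Nat.card G : ℝ) ^ r

/-- A subgroup is abelian if all its elements commute. -/
def IsAbelianSubgroup {G : Type*} [Group G] (A : Subgroup G) : Prop :=
  ∀ x y : A, x * y = y * x

/-- `mG G`: maximum order of an abelian subgroup of `G`. -/
noncomputable def mG (G : Type*) [Group G] : ℕ :=
  sSup {n : ℕ | ∃ A : Subgroup G, IsAbelianSubgroup A ∧ Nat.card A = n}

/-- `Nmax G`: number of abelian subgroups of maximum order. -/
noncomputable def Nmax (G : Type*) [Group G] : ℕ :=
  Nat.card {A : Subgroup G // IsAbelianSubgroup A ∧ Nat.card A = mG G}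

/-- `bG G`: second-largest order of an abelian subgroup. -/
noncomputable def bG (G : Type*) [Group G] : ℕ :=
  sSup {n : ℕ | ∃ A : Subgroup G, IsAbelianSubgroup A ∧ Nat.card A = n ∧ n < mG G}

/-- Bonferroni-type lower bound for the cardinality of a union. -/
lemma bonferroni {ι α : Type*} [DecidableEq ι] [DecidableEq α] (s : Finset ι)
    (f : ι → Finset α) :
    ∑ i ∈ s, (f i).card ≤
      (s.biUnion f).card + ∑ i ∈ s, ∑ j ∈ s.erase i, ((f i) ∩ (f j)).card := by
  induction s using Finset.induction_on with
  | empty => simp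
  | @insert a s ha ih =>
    rw [Finset.sum_insert ha, Finset.biUnion_insert]
    set U := s.biUnion f with hU
    have h1 : (f a).card + U.card = (f a ∪ U).card + (f a ∩ U).card :=
      (Finset.card_union_add_card_inter _ _).symm
    have h2 : (f a ∩ U).card ≤ ∑ j ∈ s, ((f a) ∩ (f j)).card := by
      rw [hU, Finset.inter_biUnion]
      exact Finset.card_biUnion_le
    have h3 : ∑ i ∈ insert a s, ∑ j ∈ (insert a s).erase i, ((f i) ∩ (f j)).card
        = ∑ j ∈ s, ((f a) ∩ (f j)).card
          + ∑ i ∈ s, (((f i) ∩ (f a)).card + ∑ j ∈ s.erase i, ((f i) ∩ (f j)).card) := by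
      rw [Finset.sum_insert ha, Finset.erase_insert ha]
      congr 1
      refine Finset.sum_congr rfl fun i hi => ?_
      have hia : i ≠ a := fun h => ha (h ▸ hi)
      rw [Finset.erase_insert_of_ne hia.symm, Finset.sum_insert (by simp [ha])]
    rw [h3, Finset.sum_add_distrib]
    omega

theorem stmt9 (G : Type*) [Group G] [Fintype G] (hna : ∃ a b : G, a * b ≠ b * a) :
    ∃ C : ℝ, ∀ r : ℕ, 1 ≤ r →
      |(Nat.card (CommTuple r G) : ℝ) - (Nmax G : ℝ) * (mG G : ℝ) ^ r| ≤
        C * (bG G : ℝ) ^ r := by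
  classical
  haveI : Fintype (Subgroup G) := Fintype.ofFinite _
  -- basic facts about mG
  set S1 : Set ℕ := {n : ℕ | ∃ A : Subgroup G, IsAbelianSubgroup A ∧ Nat.card A = n} with hS1
  have hbdd : BddAbove S1 := by
    refine ⟨Nat.card G, fun n hn => ?_⟩
    obtain ⟨A, _, hA⟩ := hn
    exact hA ▸ Subgroup.card_le_card_group A
  have hm_le : ∀ A : Subgroup G, IsAbelianSubgroup A → Nat.card A ≤ mG G :=
    fun A hA => le_csSup hbdd ⟨A, hA, rfl⟩
  have hb_le : ∀ A : Subgroup G, IsAbelianSubgroup A → Nat.card A < mG G →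
      Nat.card A ≤ bG G := by
    intro A hA hlt
    apply le_csSup
    · refine ⟨Nat.card G, fun n hn => ?_⟩
      obtain ⟨A, _, hA, _⟩ := hn
      exact hA ▸ Subgroup.card_le_card_group A
    · exact ⟨A, hA, rfl, hlt⟩
  -- mG ≥ 2
  obtain ⟨a, b, hab⟩ := hna
  have ha1 : a ≠ 1 := by rintro rfl; simp at hab
  have hzab : IsAbelianSubgroup (Subgroup.zpowers a) := by
    rintro ⟨x, hx⟩ ⟨y, hy⟩
    rw [Subgroup.mem_zpowers_iff] at hx hy
    obtain ⟨m, rfl⟩ := hx; obtain ⟨n, rfl⟩ := hy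
    exact Subtype.ext (zpow_mul_comm a m n)
  have hm2 : 2 ≤ mG G := by
    refine le_trans ?_ (hm_le _ hzab)
    rw [Nat.card_zpowers]
    have := orderOf_pos a
    have : orderOf a ≠ 1 := fun h => ha1 (orderOf_eq_one_iff.mp h)
    omega
  have hb1 : 1 ≤ bG G := by
    have hbot : IsAbelianSubgroup (⊥ : Subgroup G) := by
      rintro ⟨x, hx⟩ ⟨y, hy⟩
      simp only [Subgroup.mem_bot] at hx hy
      subst hx; subst hy; rfl
    have := hb_le ⊥ hbot (by rw [Subgroup.card_bot]; omega)
    rw [Subgroup.card_bot] at this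
    omega
  -- abelian subgroups as finsets
  set Ab : Finset (Subgroup G) := Finset.univ.filter IsAbelianSubgroup with hAb
  set M : Finset (Subgroup G) :=
    Finset.univ.filter (fun A => IsAbelianSubgroup A ∧ Nat.card A = mG G) with hM
  have hMsub : M ⊆ Ab := by
    intro A hA
    simp only [hM, hAb, Finset.mem_filter, Finset.mem_univ, true_and] at *
    exact hA.1
  have hNmax : Nmax G = M.card := by
    rw [Nmax, Nat.card_eq_fintype_card, Fintype.card_subtype]
  set N := M.card
  set K := Ab.card
  refine ⟨(N : ℝ) * N + K, fun r hr => ?_⟩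
  -- tuple finsets
  set T : Subgroup G → Finset (Fin r → G) :=
    fun A => Finset.univ.filter (fun x => ∀ i, x i ∈ A) with hT
  have hTcard : ∀ A : Subgroup G, (T A).card = (Nat.card A) ^ r := by
    intro A
    rw [hT]
    rw [← Fintype.card_subtype]
    rw [Fintype.card_congr
      (Equiv.subtypePiEquivPi (p := fun _ (b : G) => b ∈ A))]
    simp [Nat.card_eq_fintype_card]
  have hTinter : ∀ A B : Subgroup G, T A ∩ T B = T (A ⊓ B) := by
    intro A B
    ext x
    simp only [hT, Finset.mem_inter, Finset.mem_filter, Finset.mem_univ, true_and,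
      Subgroup.mem_inf]
    exact ⟨fun ⟨h1, h2⟩ i => ⟨h1 i, h2 i⟩, fun h => ⟨fun i => (h i).1, fun i => (h i).2⟩⟩
  set Sf : Finset (Fin r → G) :=
    Finset.univ.filter (fun x => ∀ i j, Commute (x i) (x j)) with hSf
  have hScard : Nat.card (CommTuple r G) = Sf.card := by
    have : Nat.card (CommTuple r G)
        = Nat.card {x : Fin r → G // ∀ i j, Commute (x i) (x j)} := rfl
    rw [this, Nat.card_eq_fintype_card, Fintype.card_subtype]
  -- upper bound
  have hsub1 : Sf ⊆ Ab.biUnion T := by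
    intro x hx
    simp only [hSf, Finset.mem_filter, Finset.mem_univ, true_and] at hx
    rw [Finset.mem_biUnion]
    refine ⟨Subgroup.closure (Set.range x), ?_, ?_⟩
    · simp only [hAb, Finset.mem_filter, Finset.mem_univ, true_and]
      intro u v
      have hcomm : ∀ p ∈ Set.range x, ∀ q ∈ Set.range x, p * q = q * p := by
        rintro p ⟨i, rfl⟩ q ⟨j, rfl⟩
        exact hx i j
      exact (Subgroup.closureCommGroupOfComm hcomm).mul_comm u v
    · simp only [hT, Finset.mem_filter, Finset.mem_univ, true_and]
      exact fun i => Subgroup.subset_closure ⟨i, rfl⟩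
  have hub : Sf.card ≤ N * (mG G) ^ r + K * (bG G) ^ r := by
    calc Sf.card ≤ (Ab.biUnion T).card := Finset.card_le_card hsub1
      _ ≤ ∑ A ∈ Ab, (T A).card := Finset.card_biUnion_le
      _ = ∑ A ∈ M, (T A).card + ∑ A ∈ Ab \ M, (T A).card :=
          (Finset.sum_sdiff hMsub).symm.trans (add_comm _ _)
      _ ≤ N * (mG G) ^ r + K * (bG G) ^ r := by
          gcongr ?_ + ?_
          · apply le_of_eq
            rw [Finset.sum_congr rfl (fun A hA => ?_), Finset.sum_const, smul_eq_mul]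
            simp only [hM, Finset.mem_filter] at hA
            rw [hTcard, hA.2.2]
          · calc ∑ A ∈ Ab \ M, (T A).card ≤ ∑ _A ∈ Ab \ M, (bG G) ^ r := by
                  refine Finset.sum_le_sum fun A hA => ?_
                  rw [Finset.mem_sdiff] at hA
                  obtain ⟨hA1, hA2⟩ := hA
                  simp only [hAb, Finset.mem_filter, Finset.mem_univ, true_and] at hA1
                  simp only [hM, Finset.mem_filter, Finset.mem_univ, true_and] at hA2
                  have hne : Nat.card A ≠ mG G := fun h => hA2 ⟨hA1, h⟩
                  have : Nat.card A ≤ bG G :=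
                    hb_le A hA1 (lt_of_le_of_ne (hm_le A hA1) hne)
                  rw [hTcard]
                  exact Nat.pow_le_pow_left this r
              _ ≤ K * (bG G) ^ r := by
                  rw [Finset.sum_const, smul_eq_mul]
                  exact Nat.mul_le_mul_right _ (Finset.card_le_card (Finset.sdiff_subset))
  -- lower bound
  have hsub2 : M.biUnion T ⊆ Sf := by
    intro x hx
    rw [Finset.mem_biUnion] at hx
    obtain ⟨A, hA, hxA⟩ := hx
    simp only [hM, Finset.mem_filter, Finset.mem_univ, true_and] at hA
    simp only [hT, Finset.mem_filter, Finset.mem_univ, true_and] at hxA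
    simp only [hSf, Finset.mem_filter, Finset.mem_univ, true_and]
    intro i j
    have := hA.1 ⟨x i, hxA i⟩ ⟨x j, hxA j⟩
    exact Subtype.ext_iff.mp this
  have hinter_small : ∀ A ∈ M, ∀ B ∈ M.erase A, (T A ∩ T B).card ≤ (bG G) ^ r := by
    intro A hA B hB
    have hBA : B ≠ A := (Finset.mem_erase.mp hB).1
    have hBM := (Finset.mem_erase.mp hB).2
    simp only [hM, Finset.mem_filter, Finset.mem_univ, true_and] at hA hBM
    rw [hTinter, hTcard]
    have habel : IsAbelianSubgroup (A ⊓ B) := by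
      intro u v
      have h1 : (u : G) ∈ A := u.2.1
      have h2 : (v : G) ∈ A := v.2.1
      have := hA.1 ⟨(u : G), h1⟩ ⟨(v : G), h2⟩
      have h3 : (u : G) * (v : G) = (v : G) * (u : G) := Subtype.ext_iff.mp this
      exact Subtype.ext h3
    have hlt : Nat.card (A ⊓ B : Subgroup G) < mG G := by
      rcases lt_or_eq_of_le (le_trans
        (Subgroup.card_le_of_le inf_le_left) (le_of_eq hA.2)) with h | h
      · exact h
      · exfalso
        have hAeq : A ⊓ B = A :=
          Subgroup.eq_of_le_of_card_ge inf_le_left (by rw [hA.2, ← h])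
        have hBeq : A ⊓ B = B :=
          Subgroup.eq_of_le_of_card_ge inf_le_right (by rw [hBM.2, ← h])
        exact hBA (hBeq ▸ hAeq)
    exact Nat.pow_le_pow_left (hb_le _ habel hlt) r
  have hlb : N * (mG G) ^ r ≤ Sf.card + N * N * (bG G) ^ r := by
    have h1 : ∑ A ∈ M, (T A).card = N * (mG G) ^ r := by
      rw [Finset.sum_congr rfl (fun A hA => ?_), Finset.sum_const, smul_eq_mul]
      simp only [hM, Finset.mem_filter] at hA
      rw [hTcard, hA.2.2]
    have h2 := bonferroni M T
    rw [h1] at h2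
    have h3 : ∑ A ∈ M, ∑ B ∈ M.erase A, (T A ∩ T B).card ≤ N * N * (bG G) ^ r := by
      calc ∑ A ∈ M, ∑ B ∈ M.erase A, (T A ∩ T B).card
          ≤ ∑ _A ∈ M, ∑ _B ∈ M, (bG G) ^ r := by
            refine Finset.sum_le_sum fun A hA => ?_
            calc ∑ B ∈ M.erase A, (T A ∩ T B).card
                ≤ ∑ _B ∈ M.erase A, (bG G) ^ r :=
                  Finset.sum_le_sum (fun B hB => hinter_small A hA B hB)
              _ ≤ ∑ _B ∈ M, (bG G) ^ r := by
                  apply Finset.sum_le_sum_of_subset (Finset.erase_subset _ _)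
        _ = N * N * (bG G) ^ r := by
            simp [mul_assoc]
            rfl
    have h4 : (M.biUnion T).card ≤ Sf.card := Finset.card_le_card hsub2
    omega
  -- conclude
  rw [hScard, hNmax]
  rw [abs_sub_le_iff]
  have hb0 : (0:ℝ) ≤ (bG G : ℝ) ^ r := by positivity
  constructor
  · have : (Sf.card : ℝ) ≤ N * (mG G) ^ r + K * (bG G) ^ r := by
      exact_mod_cast hub
    nlinarith [sq_nonneg (N:ℝ), mul_nonneg (mul_nonneg (Nat.cast_nonneg N) (Nat.cast_nonneg N)) hb0]
  · have : (N : ℝ) * (mG G) ^ r ≤ Sf.card + N * N * (bG G) ^ r := by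
      exact_mod_cast hlb
    nlinarith [mul_nonneg (Nat.cast_nonneg (α := ℝ) K) hb0]
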